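/- Let V be a finite set, N : V → Finset V with i ∉ N i and j ∈ N i ↔ i ∈ N j for all i, j ∈ V, f : V → V → ℝ symmetric with f i j = 1 whenever j ∉ N i, and b : V → ℝ. For i ∈ V and M ⊆ V define μ_i(M) = ∏_{j ∈ M \ {i}} f i j and W(M) = Σ_{i ∈ M} μ_i(M) · b_i. Define N_G(i) = ( N i ∪ ⋃_{j ∈ N i} N j ) \ {i}, and let D ⊆ V satisfy N_G(i) ∩ D = ∅ for every i ∈ D. For B ⊆ V \ D and i ∈ D set p_i(B) = exp(W(B ∪ {i})) / ( exp(W(B ∪ {i})) + exp(W(B)) ). Then for every B ⊆ V \ D and every A ⊆ D: exp(W(B ∪ A)) / ( Σ_{A' ⊆ D} exp(W(B ∪ A')) ) = ( ∏_{i ∈ A} p_i(B) ) · ( ∏_{i ∈ D \ A} (1 − p_i(B)) ). -/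

import Mathlib

open Finset Real

/-- Joint-law factorization underlying Lemma 3 (parallel updates): for a decision
schedule `D` (i.e. `N_G(i) ∩ D = ∅` for all `i ∈ D`), the conditional distribution of the
configuration on `D` given the configuration `B` outside `D` under the Gibbs measure
`Π(M) ∝ exp(W M)` factorizes into a product of single-site conditional probabilities. -/
theorem spatialCSMA_parallel_update_factorization
    {V : Type*} [Fintype V] [DecidableEq V]
    (N : V → Finset V) (hN_irrefl : ∀ i, i ∉ N i)
    (hN_symm : ∀ i j, j ∈ N i ↔ i ∈ N j)
    (f : V → V → ℝ) (hf : ∀ i j, f i j = f j i)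
    (hf_one : ∀ i j, j ∉ N i → f i j = 1)
    (b : V → ℝ)
    (μ : V → Finset V → ℝ) (hμ : ∀ k S, μ k S = ∏ j ∈ S.erase k, f k j)
    (W : Finset V → ℝ) (hW : ∀ S, W S = ∑ k ∈ S, μ k S * b k)
    (NG : V → Finset V) (hNG : ∀ i, NG i = (N i ∪ (N i).biUnion N).erase i)
    (D : Finset V) (hD : ∀ i ∈ D, NG i ∩ D = ∅)
    (p : V → Finset V → ℝ)
    (hp : ∀ i B, p i B = exp (W (B ∪ {i})) / (exp (W (B ∪ {i})) + exp (W B))) :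
    ∀ B ⊆ Finset.univ \ D, ∀ A ⊆ D,
      exp (W (B ∪ A)) / (∑ A' ∈ D.powerset, exp (W (B ∪ A')))
        = (∏ i ∈ A, p i B) * ∏ i ∈ D \ A, (1 - p i B) := by
  intro B hB A hA
  -- basic consequences of the decision-schedule property
  have hBD : ∀ x ∈ B, x ∉ D := fun x hx => (Finset.mem_sdiff.1 (hB hx)).2
  have hDD : ∀ i ∈ D, ∀ j ∈ D, i ≠ j → j ∉ N i := by
    intro i hi j hj hij hjNi
    have : j ∈ NG i ∩ D := by
      rw [hNG]
      exact Finset.mem_inter.2 ⟨Finset.mem_erase.2 ⟨fun h => hij h.symm,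
        Finset.mem_union.2 (Or.inl hjNi)⟩, hj⟩
    rw [hD i hi] at this
    exact absurd this (Finset.notMem_empty j)
  have hcomm : ∀ i ∈ D, ∀ j ∈ D, i ≠ j → ∀ k, k ∈ N i → k ∉ N j := by
    intro i hi j hj hij k hkNi hkNj
    have : j ∈ NG i ∩ D := by
      rw [hNG]
      refine Finset.mem_inter.2 ⟨Finset.mem_erase.2 ⟨fun h => hij h.symm,
        Finset.mem_union.2 (Or.inr ?_)⟩, hj⟩
      exact Finset.mem_biUnion.2 ⟨k, hkNi, (hN_symm j k).1 hkNj⟩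
    rw [hD i hi] at this
    exact absurd this (Finset.notMem_empty j)
  -- increment formula for W
  have hincr : ∀ (S : Finset V) (a : V), a ∉ S →
      W (insert a S) = W S + (μ a (insert a S) * b a +
        ∑ k ∈ S, (f k a - 1) * (μ k S * b k)) := by
    intro S a haS
    rw [hW, hW, Finset.sum_insert haS]
    have hterm : ∀ k ∈ S, μ k (insert a S) * b k
        = μ k S * b k + (f k a - 1) * (μ k S * b k) := by
      intro k hk
      have hka : k ≠ a := fun h => haS (h ▸ hk)
      have : μ k (insert a S) = f k a * μ k S := by
        rw [hμ, hμ, Finset.erase_insert_of_ne hka.symm,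
          Finset.prod_insert (fun h => haS (Finset.mem_of_mem_erase h))]
      rw [this]; ring
    rw [Finset.sum_congr rfl hterm, Finset.sum_add_distrib]
    ring
  -- key additivity: increments over a subset of D are additive
  have hkey : ∀ A' ⊆ D, W (B ∪ A') = W B + ∑ j ∈ A', (W (B ∪ {j}) - W B) := by
    intro A'
    induction A' using Finset.induction_on with
    | empty => intro _; simp
    | @insert a A' ha ih =>
        intro hins
        have haD : a ∈ D := hins (Finset.mem_insert_self a A')
        have hA'D : A' ⊆ D := fun x hx => hins (Finset.mem_insert_of_mem hx)
        have hdisj : Disjoint B A' := Finset.disjoint_left.2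
          (fun x hxB hxA => hBD x hxB (hA'D hxA))
        have haBA : a ∉ B ∪ A' := by
          simp only [Finset.mem_union, not_or]
          exact ⟨fun h => hBD a h haD, ha⟩
        have haB : a ∉ B := fun h => hBD a h haD
        have h1 : B ∪ insert a A' = insert a (B ∪ A') := Finset.union_insert a B A'
        have h2 : B ∪ {a} = insert a B := by
          rw [Finset.union_comm, ← Finset.insert_eq]
        -- the increment of W at B ∪ A' equals the increment at B
        have hμa : μ a (insert a (B ∪ A')) = μ a (insert a B) := by
          rw [hμ, hμ, Finset.erase_insert haBA, Finset.erase_insert haB,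
            Finset.prod_union hdisj]
          have : ∏ j ∈ A', f a j = 1 := by
            apply Finset.prod_eq_one
            intro j hj
            exact hf_one a j (hDD a haD j (hA'D hj) (fun h => ha (h ▸ hj)))
          rw [this, mul_one]
        have hsum : ∑ k ∈ B ∪ A', (f k a - 1) * (μ k (B ∪ A') * b k)
            = ∑ k ∈ B, (f k a - 1) * (μ k B * b k) := by
          rw [Finset.sum_union hdisj]
          have hzA : ∑ k ∈ A', (f k a - 1) * (μ k (B ∪ A') * b k) = 0 := by
            apply Finset.sum_eq_zero
            intro k hk
            have : f k a = 1 := hf_one k a (hDD k (hA'D hk) a haD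
              (fun h => ha (h ▸ hk)))
            rw [this]; ring
          rw [hzA, add_zero]
          apply Finset.sum_congr rfl
          intro k hk
          by_cases hfka : f k a = 1
          · rw [hfka]; ring
          · have hkNa : k ∈ N a := by
              by_contra h
              exact hfka (hf_one k a (fun h' => h ((hN_symm k a).1 h')))
            have : μ k (B ∪ A') = μ k B := by
              rw [hμ, hμ, Finset.erase_union_distrib,
                Finset.erase_eq_of_notMem (fun h => hBD k hk (hA'D h))]
              have hd2 : Disjoint (B.erase k) A' := Finset.disjoint_left.2
                (fun x hx hx' => hBD x (Finset.mem_of_mem_erase hx) (hA'D hx'))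
              rw [Finset.prod_union hd2]
              have : ∏ j ∈ A', f k j = 1 := by
                apply Finset.prod_eq_one
                intro j hj
                apply hf_one
                intro hjNk
                exact hcomm a haD j (hA'D hj) (fun h => ha (h ▸ hj)) k hkNa
                  ((hN_symm k j).1 hjNk)
              rw [this, mul_one]
            rw [this]
          done
        rw [h1, hincr _ a haBA, ih hA'D, Finset.sum_insert ha, hμa, hsum,
          h2, hincr _ a haB]
        ring
  -- abbreviations
  set x : V → ℝ := fun j => exp (W (B ∪ {j}) - W B) with hx
  have hxpos : ∀ j, 0 < x j := fun j => exp_pos _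
  have hx1pos : ∀ j, 0 < x j + 1 := fun j => by positivity
  have hexp : ∀ A' ⊆ D, exp (W (B ∪ A')) = exp (W B) * ∏ j ∈ A', x j := by
    intro A' hA'
    rw [hkey A' hA', exp_add, exp_sum]
  -- p in terms of x
  have hpx : ∀ i, p i B = x i / (x i + 1) := by
    intro i
    rw [hp]
    have h1 : exp (W (B ∪ {i})) = exp (W B) * x i := by
      rw [show x i = exp (W (B ∪ {i}) - W B) from rfl, ← exp_add]
      congr 1; ring
    rw [h1]
    rw [div_eq_div_iff (by positivity) (by positivity)]
    ring
  have hp1x : ∀ i, 1 - p i B = 1 / (x i + 1) := by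
    intro i
    rw [hpx i]
    rw [eq_div_iff (hx1pos i).ne', sub_mul, div_mul_cancel₀ _ (hx1pos i).ne']; ring
  -- denominator
  have hden : ∑ A' ∈ D.powerset, exp (W (B ∪ A'))
      = exp (W B) * ∏ i ∈ D, (x i + 1) := by
    rw [Finset.prod_add, Finset.mul_sum]
    apply Finset.sum_congr rfl
    intro A' hA'
    rw [hexp A' (Finset.mem_powerset.1 hA')]
    simp
  rw [hden, hexp A hA]
  have hprodD : ∏ i ∈ D, (x i + 1) = (∏ i ∈ D \ A, (x i + 1)) * ∏ i ∈ A, (x i + 1) :=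
    (Finset.prod_sdiff hA).symm
  have hAx : (∏ i ∈ A, p i B) = (∏ i ∈ A, x i) / ∏ i ∈ A, (x i + 1) := by
    rw [← Finset.prod_div_distrib]
    exact Finset.prod_congr rfl (fun i _ => hpx i)
  have hDAx : (∏ i ∈ D \ A, (1 - p i B)) = 1 / ∏ i ∈ D \ A, (x i + 1) := by
    rw [Finset.prod_congr rfl (fun i _ => hp1x i), Finset.prod_div_distrib]
    simp
  rw [hAx, hDAx, hprodD]
  have e1 : (0:ℝ) < ∏ i ∈ A, (x i + 1) := Finset.prod_pos (fun i _ => hx1pos i)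
  have e2 : (0:ℝ) < ∏ i ∈ D \ A, (x i + 1) := Finset.prod_pos (fun i _ => hx1pos i)
  have e3 : (0:ℝ) < exp (W B) := exp_pos _
  field_simp
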